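/- For every integer k ≥ 1, any word consisting of exactly k+1 occurrences of each number in {1, 2, ..., n^6+1} contains one of the following patterns: (0^{k+1}1^{k+1}...n^{k+1})^e for e ∈ {id, rev}, or (01...n)^{e1}(01...n)^{e2} for e1, e2 ∈ {id, rev}. -/

import Mathlib

/-- Standardisation of a word: replace the smallest value by 0, next smallest by 1, etc. -/
def stdz (w : List ℕ) : List ℕ := w.map (fun x => ((w.filter (· < x)).dedup).length)

/-- A word `w` contains the pattern `p` if some subword of `w` standardises to `p`. -/
def Contains (w p : List ℕ) : Prop := ∃ u : List ℕ, u.Sublist w ∧ stdz u = p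

/-- Number of repeats: indices having an earlier equal entry. -/
def repeats (w : List ℕ) : ℕ :=
  (Finset.univ.filter (fun i : Fin w.length =>
    ∃ j : Fin w.length, j < i ∧ w.get j = w.get i)).card

/-- Maximum value of a word. -/
def maxVal (w : List ℕ) : ℕ := w.foldr max 0

/-- Skew sum: entries of `u` shifted above those of `v`, with `u` first. -/
def skewSum (u v : List ℕ) : List ℕ := u.map (· + maxVal v) ++ v

/-- Direct sum: `u` first, entries of `v` shifted above those of `u`. -/
def directSum (u v : List ℕ) : List ℕ := u ++ v.map (· + maxVal u)

/-- Iterated skew sum of `m` copies of `u`. -/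
def skewPow (u : List ℕ) : ℕ → List ℕ
  | 0 => []
  | m + 1 => skewSum u (skewPow u m)

/-- Iterated direct sum of `m` copies of `u`. -/
def dirPow (u : List ℕ) : ℕ → List ℕ
  | 0 => []
  | m + 1 => directSum u (dirPow u m)

/-- The pattern 0^m 1^m ... n^m. -/
def repPat (m n : ℕ) : List ℕ := (List.range (n + 1)).flatMap (fun i => List.replicate m i)

/-- Position of the first occurrence of `v` in `w`. -/
def firstOcc (w : List ℕ) (v : ℕ) : ℕ := w.idxOf v

/-- Position of the second occurrence of `v` in `w`. -/
def secondOcc (w : List ℕ) (v : ℕ) : ℕ :=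
  w.idxOf v + 1 + (w.drop (w.idxOf v + 1)).idxOf v

section Helpers

/-! ### Erdős–Szekeres (adapted from mathlib's Archive) -/

open Function Finset in
private theorem my_erdos_szekeres {α : Type*} [LinearOrder α] {r s n : ℕ} {f : Fin n → α}
    (hn : r * s < n) (hf : Function.Injective f) :
    (∃ t : Finset (Fin n), r < t.card ∧ StrictMonoOn f ↑t) ∨
      ∃ t : Finset (Fin n), s < t.card ∧ StrictAntiOn f ↑t := by
  let inc_sequences_ending_in : Fin n → Finset (Finset (Fin n)) := fun i =>
    univ.powerset.filter fun t => Finset.max t = i ∧ StrictMonoOn f ↑t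
  let dec_sequences_ending_in : Fin n → Finset (Finset (Fin n)) := fun i =>
    univ.powerset.filter fun t => Finset.max t = i ∧ StrictAntiOn f ↑t
  have inc_i : ∀ i, {i} ∈ inc_sequences_ending_in i := fun i => by
    simp [inc_sequences_ending_in, StrictMonoOn]
  have dec_i : ∀ i, {i} ∈ dec_sequences_ending_in i := fun i => by
    simp [dec_sequences_ending_in, StrictAntiOn]
  let ab' : Fin n → ℕ × ℕ := by
    intro i
    apply
      (max' ((inc_sequences_ending_in i).image card) (Nonempty.image ⟨{i}, inc_i i⟩ _),
        max' ((dec_sequences_ending_in i).image card) (Nonempty.image ⟨{i}, dec_i i⟩ _))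
  generalize hab : ab' = ab
  rsuffices ⟨i, hi⟩ : ∃ i, r < (ab i).1 ∨ s < (ab i).2
  · refine Or.imp ?_ ?_ hi
    on_goal 1 =>
      have : (ab i).1 ∈ image card (inc_sequences_ending_in i) := by
        simp only [← hab]; exact max'_mem _ (Nonempty.image ⟨{i}, inc_i i⟩ _)
    on_goal 2 =>
      have : (ab i).2 ∈ image card (dec_sequences_ending_in i) := by
        simp only [← hab]; exact max'_mem _ (Nonempty.image ⟨{i}, dec_i i⟩ _)
    all_goals
      intro hi
      rw [mem_image] at this
      obtain ⟨t, ht₁, ht₂⟩ := this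
      refine ⟨t, by rwa [ht₂], ?_⟩
      rw [mem_filter] at ht₁
      apply ht₁.2.2
  have : Injective ab := by
    simp only [← hab]
    apply Injective.of_lt_imp_ne
    intro i j k q
    injection q with q₁ q₂
    cases lt_or_gt_of_ne fun _ => ne_of_lt ‹i < j› (hf ‹f i = f j›)
    on_goal 1 =>
      apply ne_of_lt _ q₁
      have : (ab' i).1 ∈ image card (inc_sequences_ending_in i) := by exact max'_mem _ (Nonempty.image ⟨{i}, inc_i i⟩ _)
    on_goal 2 =>
      apply ne_of_lt _ q₂
      have : (ab' i).2 ∈ image card (dec_sequences_ending_in i) := by exact max'_mem _ (Nonempty.image ⟨{i}, dec_i i⟩ _)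
    all_goals
      rw [Nat.lt_iff_add_one_le]
      apply le_max'
      rw [mem_image] at this ⊢
      rcases this with ⟨t, ht₁, ht₂⟩
      rw [mem_filter] at ht₁
      have : t.max = i := by simp only [ht₁.2.1]
      refine ⟨insert j t, ?_, ?_⟩
      · rw [mem_filter]
        refine ⟨?_, ?_, ?_⟩
        · rw [mem_powerset]; apply subset_univ
        · convert max_insert (a := j) (s := t)
          rw [ht₁.2.1, max_eq_left]
          apply WithBot.coe_le_coe.mpr (le_of_lt ‹i < j›)
        simp only [StrictMonoOn, StrictAntiOn, coe_insert, Set.mem_insert_iff, mem_coe]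
        rintro x ⟨rfl | _⟩ y ⟨rfl | _⟩ _
        · apply (irrefl _ ‹j < j›).elim
        · exfalso
          apply not_le_of_gt (_root_.trans ‹i < j› ‹j < y›) (le_max_of_eq ‹y ∈ t› ‹t.max = i›)
        · first
          | apply lt_of_le_of_lt _ ‹f i < f j›
          | apply lt_of_lt_of_le ‹f j < f i› _
          rcases lt_or_eq_of_le (le_max_of_eq ‹x ∈ t› ‹t.max = i›) with (_ | rfl)
          · apply le_of_lt (ht₁.2.2 ‹x ∈ t› (mem_of_max ‹t.max = i›) ‹x < i›)
          · rfl
        · apply ht₁.2.2 ‹x ∈ t› ‹y ∈ t› ‹x < y›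
      · rw [card_insert_of_notMem, ht₂]
        intro
        apply not_le_of_gt ‹i < j› (le_max_of_eq ‹j ∈ t› ‹t.max = i›)
  by_contra! q
  let ran : Finset (ℕ × ℕ) := (range r).image Nat.succ ×ˢ (range s).image Nat.succ
  have : image ab univ ⊆ ran := by
    rintro ⟨x₁, x₂⟩
    simp only [ran, mem_image, exists_prop, mem_range, mem_univ, mem_product, true_and,
      Prod.ext_iff]
    rintro ⟨i, rfl, rfl⟩
    specialize q i
    have z : 1 ≤ (ab i).1 ∧ 1 ≤ (ab i).2 := by
      simp only [← hab]
      constructor <;>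
        · apply le_max'
          rw [mem_image]
          exact ⟨{i}, by solve_by_elim, card_singleton i⟩
    exact ⟨⟨(ab i).1 - 1, by omega⟩, (ab i).2 - 1, by omega⟩
  apply not_le_of_gt hn
  simpa [ran, Nat.succ_injective, card_image_of_injective, ‹Injective ab›] using card_le_card this

private lemma exists_strictMono_of_card {N m : ℕ} (t : Finset (Fin N)) (h : m ≤ t.card) :
    ∃ g : Fin m → Fin N, StrictMono g ∧ ∀ i, g i ∈ t := by
  obtain ⟨t', ht', hc⟩ := Finset.exists_subset_card_eq h
  refine ⟨fun i => (t'.orderIsoOfFin hc i : Fin N), ?_, fun i => ht' (t'.orderIsoOfFin hc i).2⟩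
  intro i j hij
  exact (t'.orderIsoOfFin hc).strictMono hij

/-! ### Standardisation lemmas -/

private lemma card_filter_lt_fin {t : ℕ} (j : Fin t) :
    (Finset.univ.filter (· < j)).card = j.val := by
  rw [Finset.filter_gt_eq_Iio, Fin.card_Iio]

private lemma stdz_map {t : ℕ} (v : Fin t → ℕ) (hv : StrictMono v) (l : List (Fin t))
    (hl : ∀ j : Fin t, j ∈ l) : stdz (l.map v) = l.map Fin.val := by
  unfold stdz
  rw [List.map_map]
  refine List.map_congr_left (fun j hj => ?_)
  show ((List.map v l).filter (· < v j)).dedup.length = j.val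
  rw [← List.card_toFinset]
  have h1 : (List.map v l).filter (· < v j) = (l.filter (fun j' => j' < j)).map v := by
    rw [List.filter_map]
    congr 1
    refine List.filter_congr (fun j' _ => ?_)
    simp [hv.lt_iff_lt]
  rw [h1]
  have h2 : ((l.filter (fun j' => j' < j)).map v).toFinset
      = ((l.filter (fun j' => j' < j)).toFinset).image v := by
    ext x; simp
  rw [h2, Finset.card_image_of_injective _ hv.injective]
  have h3 : (l.filter (fun j' => j' < j)).toFinset = Finset.univ.filter (· < j) := by
    ext j'
    simp [List.mem_filter, hl j']
  rw [h3, card_filter_lt_fin]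

private lemma stdz_reverse (l : List ℕ) : stdz l.reverse = (stdz l).reverse := by
  unfold stdz
  rw [List.map_reverse]
  congr 1
  refine List.map_congr_left (fun x _ => ?_)
  rw [← List.card_toFinset, ← List.card_toFinset, List.filter_reverse, List.toFinset_reverse]

private lemma contains_reverse {w p : List ℕ} (h : Contains w.reverse p) :
    Contains w p.reverse := by
  obtain ⟨u, hu, hs⟩ := h
  exact ⟨u.reverse, by simpa using hu.reverse, by rw [stdz_reverse, hs]⟩

/-! ### Position lemmas -/

private lemma indexOf_le_of_getElem {α : Type*} [DecidableEq α] :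
    ∀ (l : List α) (i : ℕ) (h : i < l.length), l.idxOf (l[i]'h) ≤ i := by
  intro l
  induction l with
  | nil => intro i h; simp at h
  | cons x t ih =>
    intro i h
    cases i with
    | zero => simp
    | succ i =>
      by_cases hx : x = t[i]'(by simpa using h)
      · rw [show (x :: t)[i+1] = t[i]'(by simpa using h) from rfl, ← hx,
          List.idxOf_cons_self]
        omega
      · rw [show (x :: t)[i+1] = t[i]'(by simpa using h) from rfl,
          List.idxOf_cons_ne _ hx]
        have := ih i (by simpa using h)
        omega

private lemma aPos_lt {w : List ℕ} {v : ℕ} (h : v ∈ w) : firstOcc w v < w.length :=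
  List.idxOf_lt_length_iff.2 h

private lemma getElem_aPos {w : List ℕ} {v : ℕ} (h : v ∈ w) :
    w[firstOcc w v]'(aPos_lt h) = v :=
  List.getElem_idxOf _

private lemma aPos_le {w : List ℕ} {v : ℕ} {i : ℕ} (hi : i < w.length) (hv : w[i] = v) :
    firstOcc w v ≤ i := by
  have := indexOf_le_of_getElem w i hi
  rw [hv] at this
  exact this

/-- Position of the last occurrence. -/
private def lastOcc (w : List ℕ) (v : ℕ) : ℕ := w.length - 1 - w.reverse.idxOf v

private lemma bPos_lt {w : List ℕ} {v : ℕ} (h : v ∈ w) : lastOcc w v < w.length := by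
  have : 0 < w.length := List.length_pos_iff.mpr (List.ne_nil_of_mem h)
  unfold lastOcc; omega

private lemma getElem_bPos {w : List ℕ} {v : ℕ} (h : v ∈ w) :
    w[lastOcc w v]'(bPos_lt h) = v := by
  have hr : v ∈ w.reverse := List.mem_reverse.mpr h
  have hlt : w.reverse.idxOf v < w.length := by
    simpa using List.idxOf_lt_length_iff.2 hr
  have h1 : w.reverse[w.reverse.idxOf v]'(by simpa using hlt) = v :=
    List.getElem_idxOf _
  rw [List.getElem_reverse] at h1
  convert h1 using 2
  rfl

private lemma le_bPos {w : List ℕ} {v : ℕ} {i : ℕ} (hi : i < w.length) (hv : w[i] = v) :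
    i ≤ lastOcc w v := by
  have h1 : w.reverse[w.length - 1 - i]'(by simp; omega) = v := by
    rw [List.getElem_reverse]
    convert hv using 2
    omega
  have h2 : w.reverse.idxOf v ≤ w.length - 1 - i :=
    aPos_le (w := w.reverse) (by simp; omega) h1
  unfold lastOcc
  omega

private lemma aPos_lt_bPos {w : List ℕ} {v : ℕ} (h : 2 ≤ w.count v) :
    firstOcc w v < lastOcc w v := by
  have hdup : List.Sublist (List.replicate 2 v) w :=
    List.replicate_sublist_iff.mpr h
  have hdup : List.Sublist [v, v] w := hdup
  rw [List.sublist_iff_exists_fin_orderEmbedding_get_eq] at hdup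
  obtain ⟨f, hf⟩ := hdup
  have h0 := hf ⟨0, by simp⟩
  have h1 := hf ⟨1, by simp⟩
  simp only [List.get_eq_getElem] at h0 h1
  norm_num at h0 h1
  have hlt : (f ⟨0, by simp⟩ : ℕ) < (f ⟨1, by simp⟩ : ℕ) := by
    have := f.strictMono (show (⟨0, by simp⟩ : Fin 2) < ⟨1, by simp⟩ by simp)
    exact this
  have ha := aPos_le (f ⟨0, by simp⟩).isLt h0.symm
  have hb := le_bPos (f ⟨1, by simp⟩).isLt h1.symm
  omega

/-! ### Containment machinery -/

private lemma contains_master (w : List ℕ) {t : ℕ} (v : Fin t → ℕ) (hv : StrictMono v)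
    (ps : List ℕ) (l : List (Fin t)) (hlen : ps.length = l.length)
    (hps : ps.Pairwise (· < ·)) (hbound : ∀ x ∈ ps, x < w.length)
    (hsurj : ∀ j : Fin t, j ∈ l)
    (hval : ∀ (i : ℕ) (h : i < ps.length),
      w[ps[i]]'(hbound _ (ps.getElem_mem h)) = v (l[i]'(hlen ▸ h))) :
    Contains w (l.map Fin.val) := by
  refine ⟨l.map v, ?_, stdz_map v hv l hsurj⟩
  rw [List.sublist_iff_exists_fin_orderEmbedding_get_eq]
  have hlen2 : (l.map v).length = ps.length := by simp [hlen]
  have hmono : StrictMono (fun i : Fin (l.map v).length =>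
      (⟨ps[(i : ℕ)]'(hlen2 ▸ i.isLt), hbound _ (ps.getElem_mem _)⟩ : Fin w.length)) := by
    intro i j hij
    have := List.pairwise_iff_getElem.mp hps (i : ℕ) (j : ℕ) (hlen2 ▸ i.isLt) (hlen2 ▸ j.isLt) hij
    exact this
  refine ⟨OrderEmbedding.ofStrictMono _ hmono, fun ix => ?_⟩
  simp only [List.get_eq_getElem, OrderEmbedding.coe_ofStrictMono]
  rw [hval (ix : ℕ) (hlen2 ▸ ix.isLt)]
  rw [List.getElem_map]

private lemma ofFn_val_e {n : ℕ} (e : Fin (n+1) → Fin (n+1)) (he : e = id ∨ e = Fin.rev) :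
    ∃ e' ∈ ({id, List.reverse} : Set (List ℕ → List ℕ)),
      List.ofFn (fun i => (e i).val) = e' (List.range (n+1)) := by
  rcases he with rfl | rfl
  · refine ⟨id, Or.inl rfl, ?_⟩
    show List.ofFn (fun i : Fin (n+1) => i.val) = _
    rw [List.ofFn_eq_map]
    exact List.ext_getElem (by simp) (fun i h1 h2 => by simp)
  · refine ⟨List.reverse, Or.inr rfl, ?_⟩
    apply List.ext_getElem (by simp)
    intro i h1 h2
    simp only [List.getElem_ofFn, List.getElem_reverse, List.getElem_range]
    simp only [List.length_ofFn] at h1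
    simp [Fin.rev]

private lemma contains_double {w : List ℕ} {n : ℕ} (v : Fin (n+1) → ℕ) (hv : StrictMono v)
    (e₁ e₂ : Fin (n+1) → Fin (n+1)) (he₁ : e₁ = id ∨ e₁ = Fin.rev) (he₂ : e₂ = id ∨ e₂ = Fin.rev)
    (p q : Fin (n+1) → ℕ) (hp : StrictMono p) (hq : StrictMono q)
    (hcross : ∀ i j, p i < q j)
    (hpl : ∀ i, p i < w.length) (hql : ∀ i, q i < w.length)
    (hpv : ∀ i, w[p i]'(hpl i) = v (e₁ i)) (hqv : ∀ i, w[q i]'(hql i) = v (e₂ i)) :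
    ∃ e₁' ∈ ({id, List.reverse} : Set (List ℕ → List ℕ)),
      ∃ e₂' ∈ ({id, List.reverse} : Set (List ℕ → List ℕ)),
        Contains w (e₁' (List.range (n+1)) ++ e₂' (List.range (n+1))) := by
  obtain ⟨e₁', he₁', hpat₁⟩ := ofFn_val_e e₁ he₁
  obtain ⟨e₂', he₂', hpat₂⟩ := ofFn_val_e e₂ he₂
  refine ⟨e₁', he₁', e₂', he₂', ?_⟩
  have hsurj : ∀ j : Fin (n+1), j ∈ List.ofFn e₁ ++ List.ofFn e₂ := by
    intro j
    rw [List.mem_append]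
    left
    rw [List.mem_ofFn]
    rcases he₁ with rfl | rfl
    · exact ⟨j, rfl⟩
    · exact ⟨j.rev, Fin.rev_rev j⟩
  have hps : (List.ofFn p ++ List.ofFn q).Pairwise (· < ·) := by
    rw [List.pairwise_append]
    refine ⟨?_, ?_, ?_⟩
    · rw [List.pairwise_ofFn]; exact fun i j hij => hp hij
    · rw [List.pairwise_ofFn]; exact fun i j hij => hq hij
    · intro a ha b hb
      rw [List.mem_ofFn] at ha hb
      obtain ⟨i, rfl⟩ := ha; obtain ⟨j, rfl⟩ := hb
      exact hcross i j
  have hbound : ∀ x ∈ List.ofFn p ++ List.ofFn q, x < w.length := by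
    intro x hx
    rw [List.mem_append, List.mem_ofFn, List.mem_ofFn] at hx
    rcases hx with ⟨i, rfl⟩ | ⟨i, rfl⟩
    exacts [hpl i, hql i]
  have key := contains_master w v hv (List.ofFn p ++ List.ofFn q)
    (List.ofFn e₁ ++ List.ofFn e₂) (by simp) hps hbound hsurj ?_
  · rw [List.map_append] at key
    have h1 : (List.ofFn e₁).map Fin.val = List.ofFn (fun i => (e₁ i).val) := by
      rw [List.map_ofFn]; rfl
    have h2 : (List.ofFn e₂).map Fin.val = List.ofFn (fun i => (e₂ i).val) := by
      rw [List.map_ofFn]; rfl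
    rw [h1, hpat₁, h2, hpat₂] at key
    exact key
  · intro i h
    simp only [List.length_append, List.length_ofFn] at h
    by_cases hi : i < n + 1
    · have h1 : (List.ofFn p ++ List.ofFn q)[i]'(by simp; omega) = p ⟨i, hi⟩ := by
        rw [List.getElem_append_left (by simpa using hi)]
        exact List.getElem_ofFn _
      have h2 : (List.ofFn e₁ ++ List.ofFn e₂)[i]'(by simp; omega) = e₁ ⟨i, hi⟩ := by
        rw [List.getElem_append_left (by simpa using hi)]
        exact List.getElem_ofFn _
      simp only [h1, h2]
      exact hpv ⟨i, hi⟩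
    · push_neg at hi
      have hi2 : i - (n+1) < n + 1 := by omega
      have h1 : (List.ofFn p ++ List.ofFn q)[i]'(by simp; omega) = q ⟨i - (n+1), hi2⟩ := by
        rw [List.getElem_append_right (by simpa using hi)]
        simp only [List.length_ofFn]
        exact List.getElem_ofFn _
      have h2 : (List.ofFn e₁ ++ List.ofFn e₂)[i]'(by simp; omega) = e₂ ⟨i - (n+1), hi2⟩ := by
        rw [List.getElem_append_right (by simpa using hi)]
        simp only [List.length_ofFn]
        exact List.getElem_ofFn _
      simp only [h1, h2]
      exact hqv ⟨i - (n+1), hi2⟩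

private lemma count_flat {β : Type*} (m : ℕ) (g : β → ℕ) (x : ℕ) (L : List β) :
    (L.flatMap (fun i => List.replicate m (g i))).count x
      = m * (L.countP (fun i => g i == x)) := by
  induction L with
  | nil => simp
  | cons a L ih =>
    rw [List.flatMap_cons, List.count_append, ih, List.countP_cons, List.count_replicate]
    by_cases h : g a = x
    · simp only [h, beq_self_eq_true, if_true, Nat.mul_add]
      omega
    · simp [h, beq_iff_eq]

private lemma flat_sorted {β : Type*} (m : ℕ) (g : β → ℕ) (L : List β)
    (hL : L.Pairwise (fun i j => g i ≤ g j)) :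
    (L.flatMap (fun i => List.replicate m (g i))).Pairwise (· ≤ ·) := by
  induction L with
  | nil => simp
  | cons a L ih =>
    rw [List.flatMap_cons, List.pairwise_append]
    rcases List.pairwise_cons.mp hL with ⟨ha, hL'⟩
    refine ⟨List.pairwise_replicate.mpr (Or.inr le_rfl), ih hL', ?_⟩
    intro x hx y hy
    rw [List.eq_of_mem_replicate hx]
    rw [List.mem_flatMap] at hy
    obtain ⟨j, hj, hyj⟩ := hy
    rw [List.eq_of_mem_replicate hyj]
    exact ha j hj

private lemma contains_repPat {w : List ℕ} {k n : ℕ} (z : Fin (n+1) → ℕ) (hz : StrictMono z)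
    (hcnt : ∀ i, w.count (z i) = k + 1)
    (hsep : ∀ (i j : Fin (n+1)), i < j → ∀ (pi pj : ℕ) (hpi : pi < w.length)
      (hpj : pj < w.length), w[pi] = z i → w[pj] = z j → pi < pj) :
    Contains w (repPat (k+1) n) := by
  classical
  set l : List (Fin (n+1)) := (List.finRange (n+1)).flatMap
    (fun i => List.replicate (k+1) i) with hl_def
  set u : List ℕ := w.filter (fun x => decide (∃ i, z i = x)) with hu_def
  set target : List ℕ := (List.finRange (n+1)).flatMap
    (fun i => List.replicate (k+1) (z i)) with htarget_def
  have htl : target = l.map z := by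
    rw [hl_def, htarget_def, List.map_flatMap]
    simp [Function.comp]
  have hcount : ∀ x, u.count x = target.count x := by
    intro x
    by_cases hx : ∃ i, z i = x
    · obtain ⟨i, rfl⟩ := hx
      have h1 : u.count (z i) = w.count (z i) := by
        rw [hu_def]
        exact List.count_filter (by simp)
      rw [h1, hcnt, htarget_def, count_flat]
      have he1 : (List.finRange (n+1)).countP (fun j => z j == z i) = 1 := by
        have : (fun j : Fin (n+1) => z j == z i) = (fun j => j == i) := by
          funext j
          simp [beq_iff_eq, hz.injective.eq_iff]
        rw [this]
        exact List.count_eq_one_of_mem (List.nodup_finRange (n+1)) (List.mem_finRange i)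
      rw [he1, Nat.mul_one]
    · have h1 : u.count x = 0 := by
        rw [List.count_eq_zero]
        intro hmem
        rw [hu_def, List.mem_filter] at hmem
        exact hx (by simpa using hmem.2)
      have h2 : target.count x = 0 := by
        rw [htarget_def, count_flat]
        have he0 : (List.finRange (n+1)).countP (fun j => z j == x) = 0 := by
          rw [List.countP_eq_zero]
          intro j _
          simp only [beq_iff_eq]
          exact fun h => hx ⟨j, h⟩
        rw [he0, Nat.mul_zero]
      rw [h1, h2]
  have hw_pw : w.Pairwise (fun x y => (∃ i, z i = x) → (∃ j, z j = y) → x ≤ y) := by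
    rw [List.pairwise_iff_getElem]
    intro a b ha hb hab
    rintro ⟨i, hi⟩ ⟨j, hj⟩
    rcases lt_trichotomy i j with h | h | h
    · rw [← hi, ← hj]; exact le_of_lt (hz h)
    · rw [← hi, ← hj, h]
    · exfalso
      have := hsep j i h b a hb ha hj.symm hi.symm
      omega
  have hu_sorted : u.Pairwise (· ≤ ·) := by
    have h1 : u.Pairwise (fun x y => (∃ i, z i = x) → (∃ j, z j = y) → x ≤ y) :=
      hw_pw.sublist (List.filter_sublist)
    rw [List.pairwise_iff_getElem] at h1 ⊢
    intro a b ha hb hab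
    refine h1 a b ha hb hab ?_ ?_
    · simpa using (List.mem_filter.mp (List.getElem_mem ha)).2
    · simpa using (List.mem_filter.mp (List.getElem_mem hb)).2
  have ht_sorted : target.Pairwise (· ≤ ·) := by
    rw [htarget_def]
    refine flat_sorted _ _ _ ?_
    exact (List.pairwise_lt_finRange (n+1)).imp (fun h => le_of_lt (hz h))
  have hu_eq : u = target :=
    List.Perm.eq_of_sortedLE hu_sorted.sortedLE ht_sorted.sortedLE (List.perm_iff_count.mpr hcount)
  refine ⟨u, List.filter_sublist, ?_⟩
  rw [hu_eq, htl, stdz_map z hz l ?_, hl_def]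
  · have hmc : ∀ m, (List.finRange m).map Fin.val = List.range m :=
      fun m => List.ext_getElem (by simp) (fun i h1 h2 => by simp)
    rw [repPat, ← hmc, List.flatMap_map, List.map_flatMap]
    simp [Function.comp]
  · intro j
    rw [hl_def, List.mem_flatMap]
    exact ⟨j, List.mem_finRange j, List.mem_replicate.mpr ⟨Nat.succ_ne_zero k, rfl⟩⟩

end Helpers
theorem stmt_16 (k n : ℕ) (hk : 1 ≤ k) (w : List ℕ)
    (hcount : ∀ v ∈ Finset.Icc 1 (n ^ 6 + 1), w.count v = k + 1)
    (hmem : ∀ x ∈ w, x ∈ Finset.Icc 1 (n ^ 6 + 1)) :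
    (∃ e ∈ ({id, List.reverse} : Set (List ℕ → List ℕ)),
      Contains w (e (repPat (k + 1) n))) ∨
    (∃ e₁ ∈ ({id, List.reverse} : Set (List ℕ → List ℕ)),
      ∃ e₂ ∈ ({id, List.reverse} : Set (List ℕ → List ℕ)),
        Contains w (e₁ (List.range (n + 1)) ++ e₂ (List.range (n + 1)))) := by
  classical
  have hk2 : ∀ v, 1 ≤ v → v ≤ n^6+1 → 2 ≤ w.count v := by
    intro v h1 h2
    rw [hcount v (Finset.mem_Icc.mpr ⟨h1, h2⟩)]
    omega
  have hmemw : ∀ v, 1 ≤ v → v ≤ n^6+1 → v ∈ w := by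
    intro v h1 h2
    have := hk2 v h1 h2
    exact List.count_pos_iff.mp (by omega)
  -- Everything after the first Erdős–Szekeres application:
  have key : ∀ x : Fin (n^3+1) → ℕ,
      (StrictMono x ∨ StrictAnti x) →
      StrictMono (fun i => firstOcc w (x i)) →
      (∀ i, 1 ≤ x i ∧ x i ≤ n^6+1) →
      ((∃ e ∈ ({id, List.reverse} : Set (List ℕ → List ℕ)),
        Contains w (e (repPat (k + 1) n))) ∨
      (∃ e₁ ∈ ({id, List.reverse} : Set (List ℕ → List ℕ)),
        ∃ e₂ ∈ ({id, List.reverse} : Set (List ℕ → List ℕ)),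
          Contains w (e₁ (List.range (n + 1)) ++ e₂ (List.range (n + 1))))) := by
    intro x hx hax hxm
    have hxw : ∀ i, x i ∈ w := fun i => hmemw _ (hxm i).1 (hxm i).2
    have hxinj : Function.Injective x := by
      rcases hx with h | h
      exacts [h.injective, h.injective]
    have hbinj : Function.Injective (fun i => lastOcc w (x i)) := by
      intro i j hij
      apply hxinj
      have h1 := getElem_bPos (hxw i)
      have h2 := getElem_bPos (hxw j)
      rw [← h1, ← h2]
      simp only at hij
      congr 1
    have h33 : n^2 * n < n^3 + 1 := by
      have : n^2 * n = n^3 := by ring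
      omega
    -- value distinctness gives distinct first/last occurrences:
    have hfl_ne : ∀ i j : Fin (n^3+1), i ≠ j → lastOcc w (x i) ≠ firstOcc w (x j) := by
      intro i j hne heq
      apply hne
      apply hxinj
      have h1 := getElem_bPos (hxw i)
      have h2 := getElem_aPos (hxw j)
      rw [← h1, ← h2]
      congr 1
    rcases my_erdos_szekeres h33 hbinj with ⟨t, ht, hmono⟩ | ⟨t, ht, hanti⟩
    · -- last occurrences increasing on n^2+1 values
      obtain ⟨g, hg, hgt⟩ := exists_strictMono_of_card (m := n^2+1) t (by omega)
      set y : Fin (n^2+1) → ℕ := fun i => x (g i) with hy_def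
      have hyw : ∀ i, y i ∈ w := fun i => hxw (g i)
      have hay : StrictMono (fun i => firstOcc w (y i)) := fun i j hij => hax (hg hij)
      have hby : StrictMono (fun i => lastOcc w (y i)) := by
        intro i j hij
        exact hmono (Finset.mem_coe.mpr (hgt i)) (Finset.mem_coe.mpr (hgt j)) (hg hij)
      have hyinj : Function.Injective y := fun i j h => (hg.injective (hxinj h))
      by_cases hover : ∃ PQ : Fin (n^2+1) × Fin (n^2+1),
          (PQ.2 : ℕ) = (PQ.1 : ℕ) + n ∧ firstOcc w (y PQ.2) < lastOcc w (y PQ.1)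
      · -- overlapping intervals: double pattern, both halves same direction
        obtain ⟨⟨P, Q⟩, hPQ, hov⟩ := hover
        simp only at hPQ hov
        have hPn : (P : ℕ) + n < n^2 + 1 := by
          have := Q.isLt
          omega
        set z : Fin (n+1) → ℕ := fun i => y ⟨(P : ℕ) + i, by have := i.isLt; omega⟩ with hz_def
        have hiota : ∀ i j : Fin (n+1), i < j →
            (⟨(P : ℕ) + i, by have := i.isLt; omega⟩ : Fin (n^2+1))
              < ⟨(P : ℕ) + j, by have := j.isLt; omega⟩ := by
          intro i j hij
          simp only [Fin.mk_lt_mk]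
          have : (i : ℕ) < j := hij
          omega
        have hp : StrictMono (fun i => firstOcc w (z i)) := fun i j hij => hay (hiota i j hij)
        have hq : StrictMono (fun i => lastOcc w (z i)) := fun i j hij => hby (hiota i j hij)
        have hcross : ∀ i j, firstOcc w (z i) < lastOcc w (z j) := by
          intro i j
          have h1 : firstOcc w (z i) ≤ firstOcc w (y Q) := by
            apply hay.monotone
            rw [Fin.le_def]
            simp only [Fin.val_mk]
            have := i.isLt
            omega
          have h2 : lastOcc w (y P) ≤ lastOcc w (z j) := by
            apply hby.monotone
            rw [Fin.le_def]
            simp only [Fin.val_mk]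
            omega
          omega
        refine Or.inr ?_
        have hzw : ∀ i, z i ∈ w := fun i => hyw _
        rcases hx with hxmono | hxanti
        · have hzmono : StrictMono z := fun i j hij => hxmono (hg (hiota i j hij))
          exact contains_double z hzmono id id (Or.inl rfl) (Or.inl rfl)
            (fun i => firstOcc w (z i)) (fun i => lastOcc w (z i)) hp hq hcross
            (fun i => aPos_lt (hzw i)) (fun i => bPos_lt (hzw i))
            (fun i => getElem_aPos (hzw i)) (fun i => getElem_bPos (hzw i))
        · have hzanti : StrictAnti z := fun i j hij => hxanti (hg (hiota i j hij))
          have hvmono : StrictMono (fun i => z (Fin.rev i)) :=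
            fun i j hij => hzanti (Fin.rev_lt_rev.mpr hij)
          exact contains_double (fun i => z (Fin.rev i)) hvmono Fin.rev Fin.rev
            (Or.inr rfl) (Or.inr rfl)
            (fun i => firstOcc w (z i)) (fun i => lastOcc w (z i)) hp hq hcross
            (fun i => aPos_lt (hzw i)) (fun i => bPos_lt (hzw i))
            (fun i => by
              have := getElem_aPos (hzw i)
              simpa [Fin.rev_rev] using this)
            (fun i => by
              have := getElem_bPos (hzw i)
              simpa [Fin.rev_rev] using this)
      · -- no overlap: chain of separated values, repPat pattern
        push_neg at hover
        have hn1 : 1 ≤ n := by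
          by_contra hn0
          push_neg at hn0
          have hn' : n = 0 := by omega
          subst hn'
          have h00 := hover (⟨0, by omega⟩, ⟨0, by omega⟩) (by simp)
          simp only at h00
          have := aPos_lt_bPos (hk2 (y ⟨0, by omega⟩) (hxm _).1 (hxm _).2)
          omega
        have hidx : ∀ i : Fin (n+1), (i : ℕ) * n < n^2 + 1 := by
          intro i
          have h1 : (i : ℕ) ≤ n := by have := i.isLt; omega
          have h2 : (i : ℕ) * n ≤ n * n := Nat.mul_le_mul_right n h1
          have h3 : n * n = n^2 := (sq n).symm
          omega
        set z : Fin (n+1) → ℕ := fun i => y ⟨(i : ℕ) * n, hidx i⟩ with hz_def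
        have hzw : ∀ i, z i ∈ w := fun i => hyw _
        have hcnt : ∀ i, w.count (z i) = k + 1 := by
          intro i
          exact hcount (z i) (Finset.mem_Icc.mpr (hxm (g ⟨(i : ℕ) * n, hidx i⟩)))
        have hsep : ∀ (i j : Fin (n+1)), i < j → ∀ (pi pj : ℕ) (hpi : pi < w.length)
            (hpj : pj < w.length), w[pi] = z i → w[pj] = z j → pi < pj := by
          intro i j hij pi pj hpi hpj hvi hvj
          have hij' : (i : ℕ) < j := hij
          have hjn : (j : ℕ) ≤ n := by have := j.isLt; omega
          have hin1 : ((i : ℕ) + 1) * n ≤ n * n := Nat.mul_le_mul_right n (by omega)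
          have hring : ((i : ℕ) + 1) * n = (i : ℕ) * n + n := by ring
          have hsq : n * n = n^2 := (sq n).symm
          have hA := hover (⟨(i : ℕ) * n, hidx i⟩, ⟨(i : ℕ) * n + n, by omega⟩) (by simp)
          simp only at hA
          have hne : lastOcc w (y ⟨(i : ℕ) * n, hidx i⟩)
              ≠ firstOcc w (y ⟨(i : ℕ) * n + n, by omega⟩) := by
            apply hfl_ne (g ⟨(i : ℕ) * n, hidx i⟩) (g ⟨(i : ℕ) * n + n, by omega⟩)
            intro hgg
            have := hg.injective hgg
            have := congrArg Fin.val this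
            simp only [Fin.val_mk] at this
            omega
          have hmono2 : firstOcc w (y ⟨(i : ℕ) * n + n, by omega⟩)
              ≤ firstOcc w (y ⟨(j : ℕ) * n, hidx j⟩) := by
            apply hay.monotone
            rw [Fin.le_def]
            simp only [Fin.val_mk]
            have : ((i : ℕ) + 1) * n ≤ (j : ℕ) * n := Nat.mul_le_mul_right n (by omega)
            omega
          have h1 : pi ≤ lastOcc w (z i) := le_bPos hpi hvi
          have h2 : firstOcc w (z j) ≤ pj := aPos_le hpj hvj
          simp only [hz_def] at h1 h2
          omega
        have hzlt : ∀ (i j : Fin (n+1)), i < j →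
            (⟨(i : ℕ) * n, hidx i⟩ : Fin (n^2+1)) < ⟨(j : ℕ) * n, hidx j⟩ := by
          intro i j hij
          rw [Fin.lt_def]
          simp only [Fin.val_mk]
          have hij' : (i : ℕ) < j := hij
          have : ((i : ℕ) + 1) * n ≤ (j : ℕ) * n := Nat.mul_le_mul_right n (by omega)
          have hring : ((i : ℕ) + 1) * n = (i : ℕ) * n + n := by ring
          omega
        rcases hx with hxmono | hxanti
        · have hzmono : StrictMono z := fun i j hij => hxmono (hg (hzlt i j hij))
          exact Or.inl ⟨id, Or.inl rfl, contains_repPat z hzmono hcnt hsep⟩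
        · have hzanti : StrictAnti z := fun i j hij => hxanti (hg (hzlt i j hij))
          have hzrev : StrictMono (fun i => z (Fin.rev i)) :=
            fun i j hij => hzanti (Fin.rev_lt_rev.mpr hij)
          have hcnt' : ∀ i, w.reverse.count (z (Fin.rev i)) = k + 1 := by
            intro i
            rw [List.count_reverse]
            exact hcnt _
          have hsep' : ∀ (i j : Fin (n+1)), i < j → ∀ (pi pj : ℕ)
              (hpi : pi < w.reverse.length) (hpj : pj < w.reverse.length),
              w.reverse[pi] = z (Fin.rev i) → w.reverse[pj] = z (Fin.rev j) → pi < pj := by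
            intro i j hij pi pj hpi hpj hvi hvj
            rw [List.length_reverse] at hpi hpj
            rw [List.getElem_reverse] at hvi hvj
            have := hsep (Fin.rev j) (Fin.rev i) (Fin.rev_lt_rev.mpr hij)
              (w.length - 1 - pj) (w.length - 1 - pi) (by omega) (by omega) hvj hvi
            omega
          have hc : Contains w.reverse (repPat (k+1) n) :=
            contains_repPat _ hzrev hcnt' hsep'
          exact Or.inl ⟨List.reverse, Or.inr rfl, contains_reverse hc⟩
    · -- last occurrences decreasing on n+1 values: double pattern id/rev or rev/id
      obtain ⟨g, hg, hgt⟩ := exists_strictMono_of_card (m := n+1) t (by omega)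
      set y : Fin (n+1) → ℕ := fun i => x (g i) with hy_def
      have hyw : ∀ i, y i ∈ w := fun i => hxw (g i)
      have hay : StrictMono (fun i => firstOcc w (y i)) := fun i j hij => hax (hg hij)
      have hby : StrictAnti (fun i => lastOcc w (y i)) := by
        intro i j hij
        exact hanti (Finset.mem_coe.mpr (hgt i)) (Finset.mem_coe.mpr (hgt j)) (hg hij)
      have hq : StrictMono (fun i => lastOcc w (y (Fin.rev i))) :=
        fun i j hij => hby (Fin.rev_lt_rev.mpr hij)
      have hcross : ∀ i j, firstOcc w (y i) < lastOcc w (y (Fin.rev j)) := by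
        intro i j
        have h1 : firstOcc w (y i) ≤ firstOcc w (y (Fin.last n)) := hay.monotone (Fin.le_last i)
        have h2 : lastOcc w (y (Fin.rev 0)) ≤ lastOcc w (y (Fin.rev j)) :=
          hq.monotone (Fin.zero_le j)
        have h3 : firstOcc w (y (Fin.last n)) < lastOcc w (y (Fin.last n)) :=
          aPos_lt_bPos (hk2 (y (Fin.last n)) (hxm _).1 (hxm _).2)
        rw [Fin.rev_zero] at h2
        omega
      refine Or.inr ?_
      rcases hx with hxmono | hxanti
      · have hymono : StrictMono y := fun i j hij => hxmono (hg hij)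
        exact contains_double y hymono id Fin.rev (Or.inl rfl) (Or.inr rfl)
          (fun i => firstOcc w (y i)) (fun i => lastOcc w (y (Fin.rev i))) hay hq hcross
          (fun i => aPos_lt (hyw i)) (fun i => bPos_lt (hyw _))
          (fun i => getElem_aPos (hyw i)) (fun i => getElem_bPos (hyw _))
      · have hyanti : StrictAnti y := fun i j hij => hxanti (hg hij)
        have hvmono : StrictMono (fun i => y (Fin.rev i)) :=
          fun i j hij => hyanti (Fin.rev_lt_rev.mpr hij)
        exact contains_double (fun i => y (Fin.rev i)) hvmono Fin.rev id
          (Or.inr rfl) (Or.inl rfl)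
          (fun i => firstOcc w (y i)) (fun i => lastOcc w (y (Fin.rev i))) hay hq hcross
          (fun i => aPos_lt (hyw i)) (fun i => bPos_lt (hyw _))
          (fun i => by
            have := getElem_aPos (hyw i)
            simpa [Fin.rev_rev] using this)
          (fun i => getElem_bPos (hyw _))
  -- the first Erdős–Szekeres application, on first occurrences ordered by value
  have hinj1 : Function.Injective (fun i : Fin (n^6+1) => firstOcc w ((i : ℕ) + 1)) := by
    intro i j hij
    simp only at hij
    have h1 := getElem_aPos (hmemw ((i : ℕ) + 1) (by omega) (by have := i.isLt; omega))
    have h2 := getElem_aPos (hmemw ((j : ℕ) + 1) (by omega) (by have := j.isLt; omega))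
    apply Fin.ext
    have h3 : ((i : ℕ) + 1) = ((j : ℕ) + 1) := by
      rw [← h1, ← h2]
      congr 1
    omega
  have h66 : (n^3) * (n^3) < n^6 + 1 := by
    have : n^3 * n^3 = n^6 := by ring
    omega
  rcases my_erdos_szekeres h66 hinj1 with ⟨t, ht, hm⟩ | ⟨t, ht, ha⟩
  · obtain ⟨g, hg, hgt⟩ := exists_strictMono_of_card (m := n^3+1) t (by omega)
    apply key (fun i => (g i : ℕ) + 1)
    · left
      intro i j hij
      show (g i : ℕ) + 1 < (g j : ℕ) + 1
      have : (g i : ℕ) < (g j : ℕ) := hg hij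
      omega
    · intro i j hij
      exact hm (Finset.mem_coe.mpr (hgt i)) (Finset.mem_coe.mpr (hgt j)) (hg hij)
    · intro i
      exact ⟨by omega, by have := (g i).isLt; omega⟩
  · obtain ⟨g, hg, hgt⟩ := exists_strictMono_of_card (m := n^3+1) t (by omega)
    apply key (fun i => (g (Fin.rev i) : ℕ) + 1)
    · right
      intro i j hij
      show (g (Fin.rev j) : ℕ) + 1 < (g (Fin.rev i) : ℕ) + 1
      have : (g (Fin.rev j) : ℕ) < (g (Fin.rev i) : ℕ) := hg (Fin.rev_lt_rev.mpr hij)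
      omega
    · intro i j hij
      exact ha (Finset.mem_coe.mpr (hgt (Fin.rev j))) (Finset.mem_coe.mpr (hgt (Fin.rev i)))
        (hg (Fin.rev_lt_rev.mpr hij))
    · intro i
      exact ⟨by omega, by have := (g (Fin.rev i)).isLt; omega⟩
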